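/- arXiv:2510.22512 — 3 statements merged into one kernel-verified Lean document; each statement's English description precedes it below -/
import Mathlib

section
/- Define B : ℕ → ℝ recursively by B(1) = 0 and, for n ≥ 2, B(n) = 1 + (1/(n-1)) · Σ_{k=1}^{n-1} max(B(k), B(n-k)). Then for all n ≥ 1, B(n) ≤ log n / log(4/3). -/
lemma gauss2 (a b : ℕ) (h : a ≤ b + 1) :
    (∑ k ∈ Finset.Icc a b, k) * 2 + a*(a-1) = (b+1)*b := by
  have hc : (∑ k ∈ Finset.Ico 0 a, k) + ∑ k ∈ Finset.Ico a (b+1), k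
      = ∑ k ∈ Finset.Ico 0 (b+1), k :=
    Finset.sum_Ico_consecutive _ (Nat.zero_le a) h
  have h1 : Finset.Icc a b = Finset.Ico a (b+1) := by rw [Finset.Ico_add_one_right_eq_Icc]
  have h2 := Finset.sum_range_id_mul_two a
  have h3 := Finset.sum_range_id_mul_two (b+1)
  rw [Finset.range_eq_Ico] at h2 h3
  simp only [Nat.add_sub_cancel] at h3
  rw [h1]
  omega

lemma sum_max_le (n : ℕ) (hn : 2 ≤ n) :
    (∑ k ∈ Finset.Icc 1 (n-1), max k (n-k)) * 4 ≤ 3*n*(n-1) := by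
  set m := n / 2 with hm
  have hmn : 2*m ≤ n ∧ n ≤ 2*m+1 := by omega
  have hm1 : 1 ≤ m := by omega
  have hsplit : Finset.Icc 1 (n-1) = Finset.Icc 1 m ∪ Finset.Icc (m+1) (n-1) := by
    ext x; simp [Finset.mem_Icc, Finset.mem_union]; omega
  have hdisj : Disjoint (Finset.Icc 1 m) (Finset.Icc (m+1) (n-1)) := by
    simp [Finset.disjoint_left, Finset.mem_Icc]; omega
  rw [hsplit, Finset.sum_union hdisj]
  have h1 : ∑ k ∈ Finset.Icc 1 m, max k (n-k) = ∑ k ∈ Finset.Icc 1 m, (n-k) := by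
    apply Finset.sum_congr rfl; intro k hk; simp [Finset.mem_Icc] at hk
    have : k ≤ n - k := by omega
    omega
  have h2 : ∑ k ∈ Finset.Icc (m+1) (n-1), max k (n-k) = ∑ k ∈ Finset.Icc (m+1) (n-1), k := by
    apply Finset.sum_congr rfl; intro k hk; simp [Finset.mem_Icc] at hk
    have : n - k ≤ k := by omega
    omega
  rw [h1, h2]
  have h3 : (∑ k ∈ Finset.Icc 1 m, (n-k)) + ∑ k ∈ Finset.Icc 1 m, k
      = ∑ k ∈ Finset.Icc 1 m, n := by
    rw [← Finset.sum_add_distrib]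
    apply Finset.sum_congr rfl; intro k hk; simp [Finset.mem_Icc] at hk; omega
  have h4 : ∑ k ∈ Finset.Icc 1 m, (n:ℕ) = m * n := by
    simp [Nat.card_Icc, mul_comm]
  rw [h4] at h3
  have g1 := gauss2 1 m (by omega)
  have g2 := gauss2 (m+1) (n-1) (by omega)
  have hn1 : (1:ℕ) ≤ n := by omega
  simp only [Nat.add_sub_cancel] at g2
  obtain ⟨hmn1, hmn2⟩ := hmn
  zify [hn1] at g1 g2 h3 hmn1 hmn2 hm1 ⊢
  simp only [Nat.sub_self, Nat.cast_zero] at g1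
  nlinarith [sq_nonneg ((n:ℤ) - 2*m), hmn1, hmn2, hm1, g1, g2, h3]

theorem stmt_4 (B : ℕ → ℝ) (hB1 : B 1 = 0)
    (hBrec : ∀ n, 2 ≤ n →
      B n = 1 + (1 / ((n : ℝ) - 1)) * ∑ k ∈ Finset.Icc 1 (n - 1), max (B k) (B (n - k))) :
    ∀ n, 1 ≤ n → B n ≤ Real.log n / Real.log (4 / 3) := by
  have hc : 0 < Real.log (4/3) := Real.log_pos (by norm_num)
  set c := Real.log (4/3) with hcdef
  intro n
  induction n using Nat.strong_induction_on with
  | _ n ih =>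
    intro hn
    rcases eq_or_lt_of_le hn with h1 | h2
    · rw [← h1, hB1]
      simp
    · -- 2 ≤ n
      have hn2 : 2 ≤ n := h2
      have hnR : (2:ℝ) ≤ (n:ℝ) := by exact_mod_cast hn2
      have hn1R : (0:ℝ) < (n:ℝ) - 1 := by linarith
      have hnpos : (0:ℝ) < (n:ℝ) := by linarith
      set a : ℝ := 3 * n / 4 with hadef
      have ha : 0 < a := by positivity
      -- step 1: pointwise bound by logs
      have step1 : ∀ k ∈ Finset.Icc 1 (n-1),
          max (B k) (B (n-k)) ≤ Real.log ((max k (n-k) : ℕ) : ℝ) / c := by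
        intro k hk
        simp only [Finset.mem_Icc] at hk
        have hk1 : k < n := by omega
        have hk2 : n - k < n := by omega
        have hbk := ih k hk1 (by omega)
        have hbnk := ih (n-k) hk2 (by omega)
        have hkpos : (0:ℝ) < (k:ℝ) := by exact_mod_cast (by omega : 0 < k)
        have hnkpos : (0:ℝ) < ((n-k:ℕ):ℝ) := by exact_mod_cast (by omega : 0 < n - k)
        apply max_le
        · refine hbk.trans ?_
          gcongr
          exact_mod_cast le_max_left k (n-k)
        · refine hbnk.trans ?_
          gcongr
          exact_mod_cast le_max_right k (n-k)
      -- step 2: pointwise log bound (tangent line at a)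
      have step2 : ∀ k ∈ Finset.Icc 1 (n-1),
          Real.log ((max k (n-k) : ℕ) : ℝ) ≤ Real.log a + (((max k (n-k) : ℕ) : ℝ) / a - 1) := by
        intro k hk
        simp only [Finset.mem_Icc] at hk
        have hMpos : (0:ℝ) < ((max k (n-k) : ℕ) : ℝ) := by
          exact_mod_cast (by omega : 0 < max k (n-k))
        have h := Real.log_le_sub_one_of_pos (div_pos hMpos ha)
        rw [Real.log_div (ne_of_gt hMpos) (ne_of_gt ha)] at h
        linarith
      -- sum of max values
      have hsum_nat := sum_max_le n hn2
      have hsum : (∑ k ∈ Finset.Icc 1 (n-1), ((max k (n-k) : ℕ) : ℝ)) ≤ a * ((n:ℝ) - 1) := by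
        have : ((∑ k ∈ Finset.Icc 1 (n-1), max k (n-k) : ℕ) : ℝ) * 4 ≤ 3 * n * ((n:ℝ) - 1) := by
          have h := hsum_nat
          have h' : ((((∑ k ∈ Finset.Icc 1 (n-1), max k (n-k)) * 4 : ℕ)) : ℝ)
              ≤ ((3*n*(n-1) : ℕ) : ℝ) := by exact_mod_cast h
          push_cast [Nat.cast_sub (by omega : 1 ≤ n)] at h'
          convert h' using 2 <;> push_cast <;> ring
        push_cast at this ⊢
        rw [hadef]
        linarith
      -- card
      have hcard : ((Finset.Icc 1 (n-1)).card : ℝ) = (n:ℝ) - 1 := by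
        rw [Nat.card_Icc]
        push_cast [Nat.cast_sub (by omega : 1 ≤ n)]
        ring
      -- combine: sum of logs ≤ (n-1) log a
      have hlogsum : (∑ k ∈ Finset.Icc 1 (n-1), Real.log ((max k (n-k) : ℕ) : ℝ))
          ≤ ((n:ℝ) - 1) * Real.log a := by
        calc (∑ k ∈ Finset.Icc 1 (n-1), Real.log ((max k (n-k) : ℕ) : ℝ))
            ≤ ∑ k ∈ Finset.Icc 1 (n-1), (Real.log a + (((max k (n-k) : ℕ) : ℝ) / a - 1)) :=
              Finset.sum_le_sum step2
          _ = ((Finset.Icc 1 (n-1)).card : ℝ) * (Real.log a - 1)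
              + (∑ k ∈ Finset.Icc 1 (n-1), ((max k (n-k) : ℕ) : ℝ)) / a := by
              rw [Finset.sum_add_distrib, Finset.sum_sub_distrib, ← Finset.sum_div]
              simp [Finset.sum_const]
              ring
          _ ≤ ((n:ℝ) - 1) * (Real.log a - 1) + (a * ((n:ℝ) - 1)) / a := by
              rw [hcard]
              gcongr
          _ = ((n:ℝ) - 1) * Real.log a := by
              field_simp
              ring
      -- main sum bound
      have hmain : (∑ k ∈ Finset.Icc 1 (n-1), max (B k) (B (n-k)))
          ≤ ((n:ℝ) - 1) * Real.log a / c := by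
        calc (∑ k ∈ Finset.Icc 1 (n-1), max (B k) (B (n-k)))
            ≤ ∑ k ∈ Finset.Icc 1 (n-1), Real.log ((max k (n-k) : ℕ) : ℝ) / c :=
              Finset.sum_le_sum step1
          _ = (∑ k ∈ Finset.Icc 1 (n-1), Real.log ((max k (n-k) : ℕ) : ℝ)) / c := by
              rw [Finset.sum_div]
          _ ≤ ((n:ℝ) - 1) * Real.log a / c := by gcongr
      -- log a = log n - c
      have hloga : Real.log a = Real.log n - c := by
        rw [hadef, hcdef]
        rw [show (3 * (n:ℝ) / 4) = (n:ℝ) / (4/3) by ring]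
        rw [Real.log_div (ne_of_gt hnpos) (by norm_num)]
      rw [hBrec n hn2]
      have : (1 / ((n:ℝ) - 1)) * (∑ k ∈ Finset.Icc 1 (n-1), max (B k) (B (n-k)))
          ≤ (1 / ((n:ℝ) - 1)) * (((n:ℝ) - 1) * Real.log a / c) := by
        apply mul_le_mul_of_nonneg_left hmain
        positivity
      have heq : (1 / ((n:ℝ) - 1)) * (((n:ℝ) - 1) * Real.log a / c) = Real.log a / c := by
        field_simp
      rw [heq] at this
      have : B n ≤ 1 + Real.log a / c := by
        calc B n = 1 + (1 / ((n:ℝ) - 1)) * ∑ k ∈ Finset.Icc 1 (n-1), max (B k) (B (n-k)) := by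
              rw [← hBrec n hn2]
          _ ≤ 1 + Real.log a / c := by linarith
      rw [hloga] at this
      have hfin : 1 + (Real.log n - c) / c = Real.log n / c := by
        field_simp
        ring
      rw [← hBrec n hn2]
      linarith [this, hfin.le, hfin.ge]
end

section
/- Define B : ℕ → ℝ by B(1) = 0 and B(n) = 1 + (1/(n-1)) · Σ_{k=1}^{n-1} max(B(k), B(n-k)) for n ≥ 2. Then B is monotone nondecreasing on positive integers. -/
theorem stmt_5 (B : ℕ → ℝ) (hB1 : B 1 = 0)
    (hBrec : ∀ n, 2 ≤ n →
      B n = 1 + (1 / ((n : ℝ) - 1)) * ∑ k ∈ Finset.Icc 1 (n - 1), max (B k) (B (n - k))) :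
    ∀ m n, 1 ≤ m → m ≤ n → B m ≤ B n := by
  have hB2 : B 2 = 1 := by
    have h := hBrec 2 le_rfl
    norm_num [Finset.Icc_self, hB1] at h
    linarith
  have step : ∀ n, 1 ≤ n → (∀ i j, 1 ≤ i → i ≤ j → j ≤ n → B i ≤ B j) → B n ≤ B (n+1) := by
    intro n hn mono
    rcases Nat.lt_or_ge n 2 with h2 | h2
    · interval_cases n
      rw [hB1, hB2]; norm_num
    · obtain ⟨m, rfl⟩ : ∃ m, n = m + 2 := ⟨n - 2, by omega⟩
      have h1 := hBrec (m+2) (by omega)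
      have h2 := hBrec (m+3) (by omega)
      have e1 : m + 2 - 1 = m + 1 := by omega
      have e2 : m + 3 - 1 = m + 2 := by omega
      rw [e1] at h1
      rw [e2] at h2
      rw [Finset.sum_Icc_succ_top (by omega : 1 ≤ m + 2)] at h2
      set S := ∑ k ∈ Finset.Icc 1 (m+1), max (B k) (B (m+2-k)) with hS
      set S' := ∑ k ∈ Finset.Icc 1 (m+1), max (B k) (B (m+3-k)) with hS'
      have hSS' : S ≤ S' := by
        apply Finset.sum_le_sum
        intro k hk
        simp only [Finset.mem_Icc] at hk
        apply max_le_max le_rfl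
        exact mono (m+2-k) (m+3-k) (by omega) (by omega) (by omega)
      have htop : max (B (m+2)) (B (m+3-(m+2))) = B (m+2) := by
        have : m + 3 - (m + 2) = 1 := by omega
        rw [this]
        exact max_eq_left (mono 1 (m+2) le_rfl (by omega) le_rfl)
      rw [htop] at h2
      have hc1 : ((m+2 : ℕ) : ℝ) - 1 = (m : ℝ) + 1 := by push_cast; ring
      have hc2 : ((m+3 : ℕ) : ℝ) - 1 = (m : ℝ) + 2 := by push_cast; ring
      rw [hc1] at h1
      rw [hc2] at h2
      have hm1 : (0:ℝ) < (m:ℝ) + 1 := by positivity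
      have hm2 : (0:ℝ) < (m:ℝ) + 2 := by positivity
      have hSeq : S = ((m:ℝ)+1) * (B (m+2) - 1) := by
        field_simp at h1
        linarith
      rw [h2]
      have expand : 1 + 1 / ((m:ℝ)+2) * (S' + B (m+2)) = ((m:ℝ)+2+S'+B (m+2))/((m:ℝ)+2) := by
        field_simp; ring
      rw [expand, le_div_iff₀ hm2]
      nlinarith [hSS', hSeq]
  -- main induction
  have main : ∀ n, ∀ i j, 1 ≤ i → i ≤ j → j ≤ n → B i ≤ B j := by
    intro n
    induction n with
    | zero => intro i j hi hij hj; omega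
    | succ n ih =>
      intro i j hi hij hj
      rcases Nat.lt_or_ge j (n+1) with hjn | hjn
      · exact ih i j hi hij (by omega)
      · have hj' : j = n + 1 := by omega
        subst hj'
        rcases Nat.lt_or_ge i (n+1) with hin | hin
        · have hn1 : 1 ≤ n := by omega
          calc B i ≤ B n := ih i n hi (by omega) le_rfl
            _ ≤ B (n+1) := step n hn1 ih
        · have : i = n + 1 := by omega
          rw [this]
  intro m n hm hmn
  exact main n m n hm hmn le_rfl
end

section
/- Define B : ℕ → ℝ by B(1) = 0 and B(n) = 1 + (1/(n-1)) Σ_{k=1}^{n-1} max(B(k), B(n-k)) for n ≥ 2. Then B(n) ≥ log₂ n for all n ≥ 1. -/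
theorem stmt_17 (B : ℕ → ℝ) (hB1 : B 1 = 0)
    (hBrec : ∀ n, 2 ≤ n →
      B n = 1 + (1 / ((n : ℝ) - 1)) * ∑ k ∈ Finset.Icc 1 (n - 1), max (B k) (B (n - k))) :
    ∀ n : ℕ, 1 ≤ n → Real.logb 2 n ≤ B n := by
  intro n
  induction n using Nat.strong_induction_on with
  | _ n IH =>
    intro hn
    rcases eq_or_lt_of_le hn with h1 | h2
    · simp [← h1, hB1]
    · have hn2 : 2 ≤ n := h2
      have hnR : (2 : ℝ) ≤ (n : ℝ) := by exact_mod_cast hn2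
      have hpos : (0 : ℝ) < (n : ℝ) - 1 := by linarith
      rw [hBrec n hn2]
      have hsum : ((n : ℝ) - 1) * (Real.logb 2 n - 1) ≤
          ∑ k ∈ Finset.Icc 1 (n - 1), max (B k) (B (n - k)) := by
        have hcard : (Finset.Icc 1 (n - 1)).card = n - 1 := by
          rw [Nat.card_Icc]; omega
        have : ∑ k ∈ Finset.Icc 1 (n - 1), (Real.logb 2 n - 1) ≤
            ∑ k ∈ Finset.Icc 1 (n - 1), max (B k) (B (n - k)) := by
          apply Finset.sum_le_sum
          intro k hk
          simp only [Finset.mem_Icc] at hk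
          have hk1 : 1 ≤ k := hk.1
          have hkn : k ≤ n - 1 := hk.2
          have hklt : k < n := by omega
          have hnk1 : 1 ≤ n - k := by omega
          have hnklt : n - k < n := by omega
          have IHk := IH k hklt hk1
          have IHnk := IH (n - k) hnklt hnk1
          -- max k (n-k) ≥ n/2
          have hmax : Real.logb 2 n - 1 ≤ Real.logb 2 (max k (n - k) : ℕ) := by
            have hge : (n : ℝ) / 2 ≤ ((max k (n - k) : ℕ) : ℝ) := by
              have : n ≤ 2 * max k (n - k) := by omega
              have := (Nat.cast_le (α := ℝ)).mpr this
              push_cast at this ⊢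
              linarith
            have h2pos : (0 : ℝ) < (n : ℝ) / 2 := by linarith
            calc Real.logb 2 n - 1 = Real.logb 2 ((n : ℝ) / 2) := by
                  rw [Real.logb_div (by linarith) (by norm_num)]
                  simp [Real.logb_self_eq_one]
              _ ≤ Real.logb 2 ((max k (n - k) : ℕ) : ℝ) :=
                  Real.logb_le_logb_of_le (by norm_num) h2pos (by linarith)
          rcases max_choice k (n - k) with h | h <;> rw [h] at hmax
          · exact le_trans hmax (le_trans IHk (le_max_left _ _))
          · exact le_trans hmax (le_trans IHnk (le_max_right _ _))
        calc ((n : ℝ) - 1) * (Real.logb 2 n - 1)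
            = ∑ k ∈ Finset.Icc 1 (n - 1), (Real.logb 2 n - 1) := by
              rw [Finset.sum_const, hcard, nsmul_eq_mul]
              congr 1
              push_cast [Nat.cast_sub (by omega : 1 ≤ n)]
              ring
          _ ≤ _ := this
      have := mul_le_mul_of_nonneg_left hsum (le_of_lt (one_div_pos.mpr hpos))
      calc Real.logb 2 n = 1 + (1 / ((n:ℝ) - 1)) * (((n:ℝ) - 1) * (Real.logb 2 n - 1)) := by
            field_simp
            ring
        _ ≤ 1 + (1 / ((n:ℝ) - 1)) * ∑ k ∈ Finset.Icc 1 (n - 1), max (B k) (B (n - k)) := by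
            linarith
end
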